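/- There is a unique k-plane in P^{2k+2} meeting each of k+2 lines in linear general position. Equivalently, given k+2 pairwise disjoint lines M₁,...,M_{k+2} in P^{2k+2} whose union spans P^{2k+2} and which are in linear general position, there exists exactly one linear subspace Λ of dimension k intersecting every Mᵢ nontrivially. -/

import Mathlib

open Module Submodule

section AuxLemmas

variable {K V : Type*} [Field K] [AddCommGroup V] [Module K V]

private lemma aux_inj {ι : Type*} [Fintype ι] [FiniteDimensional K V] (W : ι → Submodule K V)
    (h : finrank K ↥(⨆ i, W i) = ∑ i, finrank K (W i))
    (x : ι → V) (hx : ∀ i, x i ∈ W i) (hsum : ∑ i, x i = 0) : ∀ i, x i = 0 := by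
  classical
  set Φ : ((i : ι) → ↥(W i)) →ₗ[K] V :=
    LinearMap.lsum K (fun i => ↥(W i)) K (fun i => (W i).subtype) with hΦdef
  have hΦapp : ∀ y : (i : ι) → ↥(W i), Φ y = ∑ i, (y i : V) := by
    intro y; simp [hΦdef]
  have hrange : LinearMap.range Φ = ⨆ i, W i := by
    apply le_antisymm
    · rintro _ ⟨y, rfl⟩
      rw [hΦapp]
      exact Submodule.sum_mem _ fun i _ => Submodule.mem_iSup_of_mem i (y i).2
    · refine iSup_le fun i v hv => ⟨Pi.single i ⟨v, hv⟩, ?_⟩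
      rw [hΦapp]
      rw [Finset.sum_eq_single i]
      · simp
      · intro j _ hj; simp [Pi.single_eq_of_ne hj]
      · simp
  have hker : LinearMap.ker Φ = ⊥ := by
    have h1 := Φ.finrank_range_add_finrank_ker
    rw [hrange, h, Module.finrank_pi_fintype] at h1
    have : finrank K (LinearMap.ker Φ) = 0 := by omega
    rw [Submodule.finrank_eq_zero] at this
    exact this
  have : (fun i => (⟨x i, hx i⟩ : ↥(W i))) = 0 := by
    have hinj : Function.Injective Φ := LinearMap.ker_eq_bot.mp hker
    apply hinj
    rw [map_zero, hΦapp]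
    exact hsum
  intro i
  have := congrFun this i
  simpa using congrArg Subtype.val this

private lemma aux_erase (k : ℕ) [FiniteDimensional K V]
    (M : Fin (k + 2) → Submodule K V)
    (hM2 : ∀ i, finrank K (M i) = 2)
    (hgen : ∀ S : Finset (Fin (k + 2)),
      finrank K ↥(⨆ i ∈ S, M i) = min (2 * S.card) (2 * k + 3)) :
    ∀ (j : Fin (k+2)) (x : Fin (k+2) → V), (∀ i, x i ∈ M i) → ∑ i, x i = 0 → x j = 0 →
      ∀ i, x i = 0 := by
  intro j x hx hsum hxj
  have hsup : (⨆ i : {i : Fin (k+2) // i ≠ j}, M i.1) = ⨆ i ∈ Finset.univ.erase j, M i := by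
    apply le_antisymm
    · exact iSup_le fun i => le_iSup₂_of_le i.1 (by simp [i.2]) le_rfl
    · exact iSup₂_le fun i hi => le_iSup_of_le ⟨i, by simpa using hi⟩ le_rfl
  have hcard : (Finset.univ.erase j).card = k + 1 := by
    rw [Finset.card_erase_of_mem (Finset.mem_univ j)]
    simp
  have hrank : finrank K ↥(⨆ i : {i : Fin (k+2) // i ≠ j}, M i.1)
      = ∑ i : {i : Fin (k+2) // i ≠ j}, finrank K ↥(M i.1) := by
    rw [hsup, hgen, hcard]
    have : ∀ i : {i : Fin (k+2) // i ≠ j}, finrank K ↥(M i.1) = 2 := fun i => hM2 i.1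
    rw [Finset.sum_congr rfl (fun i _ => this i), Finset.sum_const, Finset.card_univ,
      Fintype.card_subtype_compl]
    simp
    omega
  have hsum' : ∑ i : {i : Fin (k+2) // i ≠ j}, x i.1 = 0 := by
    rw [← Finset.sum_subtype (Finset.univ.erase j) (by simp) (fun i => x i)]
    rw [Finset.sum_erase _ hxj]
    exact hsum
  have key := aux_inj (K := K) (fun i : {i : Fin (k+2) // i ≠ j} => M i.1) hrank
    (fun i => x i.1) (fun i => hx i.1) hsum'
  intro i
  by_cases hij : i = j
  · rw [hij]; exact hxj
  · exact key ⟨i, hij⟩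

end AuxLemmas

theorem unique_plane_meeting_lines {K V : Type*} [Field K] [IsAlgClosed K]
    [AddCommGroup V] [Module K V] (k : ℕ)
    (hV : finrank K V = 2 * k + 3)
    (M : Fin (k + 2) → Submodule K V)
    (hM2 : ∀ i, finrank K (M i) = 2)
    (hdisj : ∀ i j, i ≠ j → M i ⊓ M j = ⊥)
    (hgen : ∀ S : Finset (Fin (k + 2)),
      finrank K ↥(⨆ i ∈ S, M i) = min (2 * S.card) (2 * k + 3)) :
    ∃! Λ : Submodule K V, finrank K Λ = k + 1 ∧ ∀ i, Λ ⊓ M i ≠ ⊥ := by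
  classical
  have hfin : FiniteDimensional K V := FiniteDimensional.of_finrank_pos (by omega)
  have herase := aux_erase k M hM2 hgen
  set Φ : ((i : Fin (k+2)) → ↥(M i)) →ₗ[K] V :=
    LinearMap.lsum K (fun i => ↥(M i)) K (fun i => (M i).subtype) with hΦdef
  have hΦapp : ∀ y : (i : Fin (k+2)) → ↥(M i), Φ y = ∑ i, (y i : V) := by
    intro y; simp [hΦdef]
  have hrange : LinearMap.range Φ = ⨆ i, M i := by
    apply le_antisymm
    · rintro _ ⟨y, rfl⟩
      rw [hΦapp]
      exact Submodule.sum_mem _ fun i _ => Submodule.mem_iSup_of_mem i (y i).2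
    · refine iSup_le fun i v hv => ⟨Pi.single i ⟨v, hv⟩, ?_⟩
      rw [hΦapp]
      rw [Finset.sum_eq_single i]
      · simp
      · intro j _ hj; simp [Pi.single_eq_of_ne hj]
      · simp
  have hsup_univ : finrank K ↥(⨆ i, M i) = 2 * k + 3 := by
    have h := hgen Finset.univ
    rw [Finset.card_univ, Fintype.card_fin] at h
    have he : (⨆ i ∈ Finset.univ, M i) = ⨆ i, M i := by simp
    rw [he] at h
    rw [h]
    omega
  have hkerrank : finrank K (LinearMap.ker Φ) = 1 := by
    have h1 := Φ.finrank_range_add_finrank_ker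
    rw [hrange, hsup_univ, Module.finrank_pi_fintype,
      Finset.sum_congr rfl (fun i _ => hM2 i), Finset.sum_const, Finset.card_univ,
      Fintype.card_fin, smul_eq_mul] at h1
    omega
  obtain ⟨x₀, hx₀ker, hx₀ne⟩ := Submodule.exists_mem_ne_zero_of_ne_bot
    (p := LinearMap.ker Φ) (by
      intro h
      rw [h, finrank_bot] at hkerrank
      omega)
  set v : Fin (k+2) → V := fun i => (x₀ i : V) with hvdef
  have hvmem : ∀ i, v i ∈ M i := fun i => (x₀ i).2
  have hvsum : ∑ i, v i = 0 := by
    have := hx₀ker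
    rw [LinearMap.mem_ker, hΦapp] at this
    exact this
  have hvne : ∀ i, v i ≠ 0 := by
    intro j hj
    apply hx₀ne
    have hall := herase j v hvmem hvsum hj
    funext i
    exact Subtype.ext (hall i)
  have hkerspan : LinearMap.ker Φ = span K {x₀} := by
    symm
    apply Submodule.eq_of_le_of_finrank_eq
    · rw [span_le, Set.singleton_subset_iff]; exact hx₀ker
    · rw [finrank_span_singleton hx₀ne, hkerrank]
  -- ψ computes the rank of Λ₀ = span of the range of v
  set ψ : (Fin (k+2) → K) →ₗ[K] V := Fintype.linearCombination K v with hψdef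
  have hψapp : ∀ a : Fin (k+2) → K, ψ a = ∑ i, a i • v i := fun a => rfl
  have hone_ne : (fun _ => (1:K) : Fin (k+2) → K) ≠ 0 := by
    intro h
    have := congrFun h 0
    simp at this
  have hψker : LinearMap.ker ψ = span K {(fun _ => 1 : Fin (k+2) → K)} := by
    apply le_antisymm
    · intro a ha
      rw [LinearMap.mem_ker, hψapp] at ha
      have hx : ∀ i, (a i - a 0) • v i = 0 := by
        apply herase 0 (fun i => (a i - a 0) • v i)
          (fun i => Submodule.smul_mem _ _ (hvmem i)) ?_ (by simp)
        calc ∑ i, (a i - a 0) • v i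
            = ∑ i, a i • v i - a 0 • ∑ i, v i := by
              rw [Finset.smul_sum, ← Finset.sum_sub_distrib]
              exact Finset.sum_congr rfl fun i _ => by rw [sub_smul]
          _ = 0 := by rw [ha, hvsum, smul_zero, sub_zero]
      rw [mem_span_singleton]
      refine ⟨a 0, funext fun i => ?_⟩
      have := hx i
      rcases smul_eq_zero.mp this with h | h
      · simp [sub_eq_zero.mp h]
      · exact absurd h (hvne i)
    · rw [span_le, Set.singleton_subset_iff, SetLike.mem_coe, LinearMap.mem_ker, hψapp]
      simpa using hvsum
  have hΛ₀rank : finrank K (span K (Set.range v)) = k + 1 := by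
    have h1 := ψ.finrank_range_add_finrank_ker
    rw [hψker, finrank_span_singleton hone_ne, hψdef,
      Fintype.range_linearCombination, Module.finrank_fin_fun] at h1
    omega
  refine ⟨span K (Set.range v), ⟨hΛ₀rank, fun i => ?_⟩, ?_⟩
  · intro hbot
    apply hvne i
    have : v i ∈ (⊥ : Submodule K V) :=
      hbot ▸ (Submodule.mem_inf.mpr ⟨Submodule.subset_span ⟨i, rfl⟩, hvmem i⟩)
    simpa using this
  · rintro Λ ⟨hΛrank, hΛmeet⟩
    have hw : ∀ i, ∃ w : V, w ∈ Λ ⊓ M i ∧ w ≠ 0 :=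
      fun i => Submodule.exists_mem_ne_zero_of_ne_bot (hΛmeet i)
    choose w hwmem hwne using hw
    have hwΛ : ∀ i, w i ∈ Λ := fun i => (Submodule.mem_inf.mp (hwmem i)).1
    have hwM : ∀ i, w i ∈ M i := fun i => (Submodule.mem_inf.mp (hwmem i)).2
    have hnli : ¬ LinearIndependent K w := by
      intro hli
      have hli' : LinearIndependent K (fun i => (⟨w i, hwΛ i⟩ : ↥Λ)) := by
        apply LinearIndependent.of_comp Λ.subtype
        exact hli
      have hcard := hli'.fintype_card_le_finrank
      rw [Fintype.card_fin, hΛrank] at hcard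
      omega
    obtain ⟨g, hgsum, i₀, hgi₀⟩ := Fintype.not_linearIndependent_iff.mp hnli
    have hgne : ∀ i, g i ≠ 0 := by
      intro j hgj
      have hall := herase j (fun i => g i • w i)
        (fun i => Submodule.smul_mem _ _ (hwM i)) hgsum (by simp [hgj])
      rcases smul_eq_zero.mp (hall i₀) with h | h
      · exact hgi₀ h
      · exact hwne i₀ h
    set y : (i : Fin (k+2)) → ↥(M i) := fun i => g i • ⟨w i, hwM i⟩ with hydef
    have hyk : y ∈ LinearMap.ker Φ := by
      rw [LinearMap.mem_ker, hΦapp]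
      simpa [hydef] using hgsum
    rw [hkerspan, mem_span_singleton] at hyk
    obtain ⟨c, hc⟩ := hyk
    have hcomp : ∀ i, c • v i = g i • w i := by
      intro i
      have h := congrFun hc i
      have := congrArg Subtype.val h
      simpa [hydef, hvdef] using this
    have hcne : c ≠ 0 := by
      intro h
      have h0 := hcomp 0
      rw [h, zero_smul] at h0
      rcases smul_eq_zero.mp h0.symm with h' | h'
      · exact hgne 0 h'
      · exact hwne 0 h'
    have hvmemΛ : ∀ i, v i ∈ Λ := by
      intro i
      have : v i = c⁻¹ • (g i • w i) := by
        rw [← hcomp i, smul_smul, inv_mul_cancel₀ hcne, one_smul]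
      rw [this]
      exact Submodule.smul_mem _ _ (Submodule.smul_mem _ _ (hwΛ i))
    symm
    apply Submodule.eq_of_le_of_finrank_eq
    · rw [span_le]
      rintro _ ⟨i, rfl⟩
      exact hvmemΛ i
    · rw [hΛ₀rank, hΛrank]
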